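/- Let P(X) = X⁴ + bX² + d be a polynomial over a field K of characteristic ≠ 2 with roots ±α, ±β in a splitting field. If α² ∉ K and αβ ∉ K, then P is irreducible over K. -/

import Mathlib

open Polynomial

theorem stmt_2 (K L : Type*) [Field K] [Field L] [Algebra K L]
    (hchar : ringChar K ≠ 2) (b d : K) (α β : L)
    (hroots : (X ^ 4 + C b * X ^ 2 + C d).map (algebraMap K L)
      = (X - C α) * (X + C α) * (X - C β) * (X + C β))
    (hα : α ^ 2 ∉ Set.range (algebraMap K L))
    (hαβ : α * β ∉ Set.range (algebraMap K L)) :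
    Irreducible (X ^ 4 + C b * X ^ 2 + C d) := by
  set A := algebraMap K L with hA
  set P : K[X] := X ^ 4 + C b * X ^ 2 + C d with hPdef
  have hPdeg : P.natDegree = 4 := by rw [hPdef]; compute_degree!
  have hP0 : P ≠ 0 := fun h => by simp [h] at hPdeg
  have hPm0 : P.map A ≠ 0 := (Polynomial.map_ne_zero_iff (algebraMap K L).injective).mpr hP0
  -- product identity
  have hprod : P.map A = X ^ 4 - C (α ^ 2 + β ^ 2) * X ^ 2 + C (α ^ 2 * β ^ 2) := by
    rw [hroots]; simp only [map_add, map_mul, map_pow]; ring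
  -- b relation
  have hb : A b = -(α ^ 2 + β ^ 2) := by
    have h2 := congrArg (fun p => p.coeff 2) hprod
    simp only [hPdef, coeff_map, coeff_add, coeff_sub, coeff_C_mul, coeff_X_pow, coeff_C] at h2
    norm_num at h2
    linear_combination h2
  -- closure of range under negation
  have hneg : ∀ x : L, -x ∈ Set.range A → x ∈ Set.range A := by
    rintro x ⟨c, hc⟩; exact ⟨-c, by rw [map_neg, hc, neg_neg]⟩
  have hβ2 : β ^ 2 ∉ Set.range A := by
    rintro ⟨c, hc⟩
    exact hα ⟨-b - c, by rw [map_sub, map_neg, hb, hc]; ring⟩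
  -- roots of P.map are in S
  have hS : ∀ r : L, (P.map A).eval r = 0 → r = α ∨ r = -α ∨ r = β ∨ r = -β := by
    intro r hr
    rw [hroots] at hr
    simp only [eval_mul, eval_sub, eval_add, eval_X, eval_C, mul_eq_zero] at hr
    rcases hr with ((h | h) | h) | h
    · exact Or.inl (by linear_combination h)
    · exact Or.inr (Or.inl (by linear_combination h))
    · exact Or.inr (Or.inr (Or.inl (by linear_combination h)))
    · exact Or.inr (Or.inr (Or.inr (by linear_combination h)))
  -- P.map splits
  have hsplit : (P.map A).Splits := by
    rw [hroots]
    repeat' apply Splits.mul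
    · exact Splits.X_sub_C _
    · rw [show X + C α = X - C (-α) by simp]; exact Splits.X_sub_C _
    · exact Splits.X_sub_C _
    · rw [show X + C β = X - C (-β) by simp]; exact Splits.X_sub_C _
  -- contradiction from product of two roots in range
  have hcontra : ∀ x y : L, (x = α ∨ x = -α ∨ x = β ∨ x = -β) →
      (y = α ∨ y = -α ∨ y = β ∨ y = -β) → x * y ∉ Set.range A := by
    intro x y hx hy hmem
    rcases hx with rfl | rfl | rfl | rfl <;> rcases hy with rfl | rfl | rfl | rfl
    · exact hα (by simpa [sq] using hmem)
    · exact hα (by simpa [sq] using hneg _ (by simpa using hmem))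
    · exact hαβ hmem
    · exact hαβ (hneg _ (by simpa using hmem))
    · exact hα (by simpa [sq] using hneg _ (by simpa using hmem))
    · exact hα (by simpa [sq] using (by simpa using hmem : α * α ∈ Set.range A))
    · exact hαβ (hneg _ (by simpa using hmem))
    · exact hαβ (by simpa [neg_mul, mul_neg, neg_neg] using hmem)
    · exact hαβ (by simpa [mul_comm] using hmem)
    · exact hαβ (hneg _ (by simpa [mul_comm] using hmem))
    · exact hβ2 (by simpa [sq] using hmem)
    · exact hβ2 (by simpa [sq] using hneg _ (by simpa using hmem))
    · exact hαβ (hneg _ (by simpa [mul_comm] using hmem))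
    · exact hαβ (by simpa [neg_mul, mul_neg, neg_neg, mul_comm] using hmem)
    · exact hβ2 (by simpa [sq] using hneg _ (by simpa using hmem))
    · exact hβ2 (by simpa [sq] using (by simpa using hmem : β * β ∈ Set.range A))
  -- no monic divisor of degree 1 or 2
  have key : ∀ q : K[X], q.Monic → q ∣ P → q.natDegree = 1 ∨ q.natDegree = 2 → False := by
    intro q hmq hdvd hdeg
    have hqm : (q.map A).Monic := hmq.map A
    have hqdvd : q.map A ∣ P.map A := Polynomial.map_dvd A hdvd
    have hqsplit : (q.map A).Splits :=
      Splits.of_dvd hsplit hPm0 hqdvd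
    have hcard : Multiset.card (q.map A).roots = (q.map A).natDegree :=
      (splits_iff_card_roots).mp hqsplit
    have hqprod : q.map A = ((q.map A).roots.map fun a => X - C a).prod :=
      Splits.eq_prod_roots_of_monic hqsplit hqm
    have hrootS : ∀ r ∈ (q.map A).roots, r = α ∨ r = -α ∨ r = β ∨ r = -β := by
      intro r hr
      apply hS
      obtain ⟨u, hu⟩ := hqdvd
      rw [hu, eval_mul, (isRoot_of_mem_roots hr).eq_zero, zero_mul]
    have hdegmap : (q.map A).natDegree = q.natDegree := natDegree_map A
    have hc0 : (q.map A).coeff 0 = A (q.coeff 0) := coeff_map A 0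
    rcases hdeg with h1 | h2
    · -- degree 1
      rw [hdegmap, h1] at hcard
      obtain ⟨a, ha⟩ := Multiset.card_eq_one.mp hcard
      have hqeq : q.map A = X - C a := by rw [hqprod, ha]; simp
      have haS := hrootS a (by rw [ha]; simp)
      have haR : a ∈ Set.range A := by
        refine hneg _ ⟨q.coeff 0, ?_⟩
        rw [← hc0, hqeq]
        simp
      obtain ⟨c, hc⟩ := haR
      refine hcontra a a haS haS ⟨c * c, ?_⟩
      rw [map_mul, hc]
    · -- degree 2
      rw [hdegmap, h2] at hcard
      obtain ⟨a, a', ha⟩ := Multiset.card_eq_two.mp hcard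
      have hqeq : q.map A = (X - C a) * (X - C a') := by rw [hqprod, ha]; simp
      have haS := hrootS a (by rw [ha]; simp)
      have haS' := hrootS a' (by rw [ha]; simp)
      refine hcontra a a' haS haS' ⟨q.coeff 0, ?_⟩
      have := congrArg (fun p => p.coeff 0) hqeq
      simp only [hc0] at this
      rw [this]
      simp [coeff_mul, mul_comm]
  -- conclude irreducibility
  constructor
  · intro hu
    have := natDegree_eq_zero_of_isUnit hu
    omega
  · intro q r hqr
    by_contra hcon
    push_neg at hcon
    obtain ⟨hq, hr⟩ := hcon
    have hq0 : q ≠ 0 := fun h => hP0 (by rw [hqr, h, zero_mul])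
    have hr0 : r ≠ 0 := fun h => hP0 (by rw [hqr, h, mul_zero])
    have hsum : q.natDegree + r.natDegree = 4 := by
      rw [← natDegree_mul hq0 hr0, ← hqr, hPdeg]
    have hq1 : q.natDegree ≠ 0 := fun h => hq (by
      rw [eq_C_of_natDegree_eq_zero h]
      exact isUnit_C.mpr (isUnit_iff_ne_zero.mpr
        (fun h0 => hq0 (by rw [eq_C_of_natDegree_eq_zero h, h0, map_zero]))))
    have hr1 : r.natDegree ≠ 0 := fun h => hr (by
      rw [eq_C_of_natDegree_eq_zero h]
      exact isUnit_C.mpr (isUnit_iff_ne_zero.mpr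
        (fun h0 => hr0 (by rw [eq_C_of_natDegree_eq_zero h, h0, map_zero]))))
    have hcases : (q.natDegree = 1 ∨ q.natDegree = 2) ∨ (r.natDegree = 1 ∨ r.natDegree = 2) := by
      omega
    have hlq : leadingCoeff q ≠ 0 := leadingCoeff_ne_zero.mpr hq0
    have hlr : leadingCoeff r ≠ 0 := leadingCoeff_ne_zero.mpr hr0
    have huq : (C (leadingCoeff q)⁻¹ : K[X]) * C (leadingCoeff q) = 1 := by
      rw [← C_mul, inv_mul_cancel₀ hlq, C_1]
    have hur : (C (leadingCoeff r)⁻¹ : K[X]) * C (leadingCoeff r) = 1 := by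
      rw [← C_mul, inv_mul_cancel₀ hlr, C_1]
    rcases hcases with hqd | hrd
    · exact key (q * C (leadingCoeff q)⁻¹) (monic_mul_leadingCoeff_inv hq0)
        ⟨C (leadingCoeff q) * r, by
          rw [hqr, mul_assoc, ← mul_assoc (C (leadingCoeff q)⁻¹), huq, one_mul]⟩
        (by rwa [natDegree_mul hq0 (by simp [hlq]), natDegree_C, add_zero])
    · exact key (r * C (leadingCoeff r)⁻¹) (monic_mul_leadingCoeff_inv hr0)
        ⟨C (leadingCoeff r) * q, by
          rw [hqr, mul_comm q r, mul_assoc, ← mul_assoc (C (leadingCoeff r)⁻¹), hur, one_mul]⟩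
        (by rwa [natDegree_mul hr0 (by simp [hlr]), natDegree_C, add_zero])
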